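/- If the weight profile w is neither distinct nor essentially distinct, then no mechanism that admits a Nash equilibrium at every problem is w-popular in equilibrium. -/

import Mathlib

open scoped Classical

section Defs

variable {I O : Type} [Fintype I] [Fintype O]

/-- A mechanism maps each problem (preference profile, capacity profile) to an assignment. -/
abbrev Mechanism (I O : Type) : Type :=
  (I → LinearOrder (Option O)) → (O → ℕ) → I → Option O

/-- `x` is strictly preferred to `y` under the strict preference (linear order) `p`,
where `none` represents being unassigned (∅). -/
def Prefers (p : LinearOrder (Option O)) (x y : Option O) : Prop := p.lt y x

/-- A matching: each object `a` is assigned to at most `q a` agents. -/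
def IsMatching (q : O → ℕ) (μ : I → Option O) : Prop :=
  ∀ a : O, (Finset.univ.filter fun i : I => μ i = some a).card ≤ q a

/-- Every object has capacity at least one. -/
def ValidCaps (q : O → ℕ) : Prop := ∀ a : O, 1 ≤ q a

/-- `μ` is more w-popular than `μ'`. -/
def MoreWPopular (w : I → ℝ) (P : I → LinearOrder (Option O)) (μ μ' : I → Option O) : Prop :=
  (∑ j ∈ Finset.univ.filter fun j : I => Prefers (P j) (μ' j) (μ j), w j)
    < ∑ i ∈ Finset.univ.filter fun i : I => Prefers (P i) (μ i) (μ' i), w i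

/-- `μ` is a w-popular matching for problem `(P, q)`. -/
def WPopular (w : I → ℝ) (P : I → LinearOrder (Option O)) (q : O → ℕ)
    (μ : I → Option O) : Prop :=
  IsMatching q μ ∧ ∀ μ', IsMatching q μ' → ¬ MoreWPopular w P μ' μ

/-- `μ` is more popular than `μ'` (unweighted, counting agents). -/
def MorePopular (P : I → LinearOrder (Option O)) (μ μ' : I → Option O) : Prop :=
  (Finset.univ.filter fun j : I => Prefers (P j) (μ' j) (μ j)).card
    < (Finset.univ.filter fun i : I => Prefers (P i) (μ i) (μ' i)).card

/-- `μ` is a popular matching for problem `(P, q)`. -/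
def Popular (P : I → LinearOrder (Option O)) (q : O → ℕ) (μ : I → Option O) : Prop :=
  IsMatching q μ ∧ ∀ μ', IsMatching q μ' → ¬ MorePopular P μ' μ

/-- `μ'` Pareto improves upon `μ`. -/
def ParetoImproves (P : I → LinearOrder (Option O)) (μ' μ : I → Option O) : Prop :=
  (∀ i : I, (P i).le (μ i) (μ' i)) ∧ ∃ j : I, Prefers (P j) (μ' j) (μ j)

/-- `μ` is non-wasteful: no agent prefers an object with unfilled capacity to her assignment. -/
def NonWasteful (P : I → LinearOrder (Option O)) (q : O → ℕ) (μ : I → Option O) : Prop :=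
  ∀ (i : I) (a : O), (Finset.univ.filter fun j : I => μ j = some a).card < q a →
    ¬ Prefers (P i) (some a) (μ i)

/-- The enumeration `e` lists the agents in weakly decreasing order of weight. -/
def DecreasingEnum (w : I → ℝ) (e : Fin (Fintype.card I) ≃ I) : Prop :=
  ∀ j k : Fin (Fintype.card I), j ≤ k → w (e k) ≤ w (e j)

/-- The weight profile is cumulatively ordered (w.r.t. the decreasing enumeration `e`):
each agent's weight is at least the sum of the weights of all later agents. -/
def CumulativelyOrdered (w : I → ℝ) (e : Fin (Fintype.card I) ≃ I) : Prop :=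
  ∀ j : Fin (Fintype.card I),
    (∑ k ∈ Finset.univ.filter fun k : Fin (Fintype.card I) => j < k, w (e k)) ≤ w (e j)

/-- All weights are pairwise different. -/
def DistinctWeights (w : I → ℝ) : Prop := Function.Injective w

/-- Essentially distinct (w.r.t. the decreasing enumeration `e`): all weights except possibly
the last two are pairwise different, the last two are equal, and the third-from-last weight is
at least the sum of the last two.  (Paper indices `i_1, …, i_n` correspond to `e 0, …, e (n-1)`.) -/
def EssentiallyDistinct (w : I → ℝ) (e : Fin (Fintype.card I) ≃ I) : Prop :=
  (∀ j k : Fin (Fintype.card I), j < k → (k : ℕ) + 2 ≤ Fintype.card I → w (e j) ≠ w (e k)) ∧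
  (∀ j k : Fin (Fintype.card I), (j : ℕ) + 2 = Fintype.card I → (k : ℕ) + 1 = Fintype.card I →
    w (e j) = w (e k)) ∧
  (∀ j k l : Fin (Fintype.card I), (j : ℕ) + 3 = Fintype.card I →
    (k : ℕ) + 2 = Fintype.card I → (l : ℕ) + 1 = Fintype.card I →
    w (e k) + w (e l) ≤ w (e j))

/-- The most preferred element (under `p`) of `{∅} ∪ {objects with remaining capacity}`. -/
noncomputable def sdChoice (p : LinearOrder (Option O)) (rem : O → ℕ) : Option O :=
  @Finset.max' (Option O) p
    (insert none ((Finset.univ.filter fun a : O => 0 < rem a).image some))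
    ⟨none, Finset.mem_insert_self _ _⟩

/-- State of the serial dictatorship after the first `k` agents (in the order `e`) have picked:
the partial assignment and the remaining capacities. -/
noncomputable def sdState (e : Fin (Fintype.card I) ≃ I)
    (P : I → LinearOrder (Option O)) (q : O → ℕ) : ℕ → (I → Option O) × (O → ℕ)
  | 0 => (fun _ => none, q)
  | k + 1 =>
    let prev := sdState e P q k
    if h : k < Fintype.card I then
      let i := e ⟨k, h⟩
      let c := sdChoice (P i) prev.2
      (Function.update prev.1 i c, fun a => if c = some a then prev.2 a - 1 else prev.2 a)
    else prev

/-- The outcome of the serial dictatorship with agent ordering `e` at problem `(P, q)`: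
agents pick, one by one in the order `e`, their most preferred acceptable object with
remaining capacity (and get ∅ if none remains). -/
noncomputable def SD (e : Fin (Fintype.card I) ≃ I)
    (P : I → LinearOrder (Option O)) (q : O → ℕ) : I → Option O :=
  (sdState e P q (Fintype.card I)).1

/-- An agent ordering is consistent with the weight profile `w` if agents with strictly larger
weight come strictly earlier. -/
def ConsistentOrder (w : I → ℝ) (e : Fin (Fintype.card I) ≃ I) : Prop :=
  ∀ i j : I, w j < w i → e.symm i < e.symm j

/-- A mechanism always produces a matching. -/
def IsMechanism (ψ : Mechanism I O) : Prop :=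
  ∀ P q, ValidCaps q → IsMatching q (ψ P q)

/-- Strategy-proofness: no agent can ever obtain a strictly preferred assignment
by misreporting. -/
def StrategyProof (ψ : Mechanism I O) : Prop :=
  ∀ P q, ValidCaps q → ∀ (i : I) (P'i : LinearOrder (Option O)),
    ¬ Prefers (P i) (ψ (Function.update P i P'i) q i) (ψ P q i)

/-- A mechanism is w-popular if its outcome is w-popular whenever a w-popular matching exists. -/
def WPopularMech (w : I → ℝ) (ψ : Mechanism I O) : Prop :=
  ∀ P q, ValidCaps q → (∃ μ, WPopular w P q μ) → WPopular w P q (ψ P q)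

/-- A mechanism is popular if its outcome is popular whenever a popular matching exists. -/
def PopularMech (ψ : Mechanism I O) : Prop :=
  ∀ P q, ValidCaps q → (∃ μ, Popular P q μ) → Popular P q (ψ P q)

/-- A mechanism is non-wasteful if its outcome is always non-wasteful. -/
def NonWastefulMech (ψ : Mechanism I O) : Prop :=
  ∀ P q, ValidCaps q → NonWasteful P q (ψ P q)

/-- `p` declares `a` as its only acceptable object (the class 𝒫ₐ). -/
def OnlyAcceptable (p : LinearOrder (Option O)) (a : O) : Prop :=
  p.lt none (some a) ∧ ∀ b : O, b ≠ a → p.lt (some b) none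

/-- `p` declares no object acceptable (the class 𝒫_∅). -/
def NothingAcceptable (p : LinearOrder (Option O)) : Prop :=
  ∀ b : O, p.lt (some b) none

/-- Preserving dispute resolutions. -/
def PreservesDisputeResolutions (ψ : Mechanism I O) : Prop :=
  ∀ P q, ValidCaps q → ∀ (i j : I) (a : O) (P'i : LinearOrder (Option O)),
    ψ P q j = some a → Prefers (P i) (some a) (ψ P q i) →
    OnlyAcceptable P'i a → ψ (Function.update P i P'i) q i = none →
    ∀ (P'' : I → LinearOrder (Option O)) (q' : O → ℕ), ValidCaps q' → q' a = 1 →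
      OnlyAcceptable (P'' i) a → OnlyAcceptable (P'' j) a →
      (∀ k : I, k ≠ i → k ≠ j → NothingAcceptable (P'' k)) →
      ψ P'' q' i = none ∧ ψ P'' q' j = some a

/-- `P'` is a (pure) Nash equilibrium of the preference-reporting game induced by `ψ`
at the problem `(P, q)` (true preferences `P`). -/
def NashEq (ψ : Mechanism I O) (P : I → LinearOrder (Option O)) (q : O → ℕ)
    (P' : I → LinearOrder (Option O)) : Prop :=
  ∀ (i : I) (P''i : LinearOrder (Option O)),
    ¬ Prefers (P i) (ψ (Function.update P' i P''i) q i) (ψ P' q i)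

/-- The mechanism admits a Nash equilibrium at every problem. -/
def AdmitsNash (ψ : Mechanism I O) : Prop :=
  ∀ P q, ValidCaps q → ∃ P', NashEq ψ P q P'

/-- w-popularity in equilibrium: every Nash-equilibrium outcome is w-popular
whenever a w-popular matching exists. -/
def WPopularInEquilibrium (w : I → ℝ) (ψ : Mechanism I O) : Prop :=
  ∀ P q, ValidCaps q → ∀ P', NashEq ψ P q P' →
    (∃ μ, WPopular w P q μ) → WPopular w P q (ψ P' q)

end Defs


/-! ### Auxiliary machinery for the proof of Statement 15 -/

section Aux

variable {I O : Type} [Fintype I] [Fintype O]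

/-- A numeric key used to build explicit linear orders on `Option O`:
`p₁` on top, then `p₂`, then `none`, then everything else. -/
noncomputable def pkey (p₁ p₂ : Option O) (v : Option O) : ℕ :=
  if v = p₁ then Fintype.card (Option O) + 2
  else if v = p₂ then Fintype.card (Option O) + 1
  else if v = none then Fintype.card (Option O)
  else (Fintype.equivFin (Option O) v : ℕ)

lemma pkey_inj (p₁ p₂ : Option O) : Function.Injective (pkey p₁ p₂) := by
  intro u v huv
  unfold pkey at huv
  have hu := (Fintype.equivFin (Option O) u).is_lt
  have hv := (Fintype.equivFin (Option O) v).is_lt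
  split_ifs at huv <;> first
    | (subst_vars; rfl)
    | omega
    | (exact (Fintype.equivFin (Option O)).injective (Fin.ext huv))

/-- The preference `p₁ > p₂ > none > (rest)`. -/
noncomputable def mkPref (p₁ p₂ : Option O) : LinearOrder (Option O) :=
  LinearOrder.lift' (pkey p₁ p₂) (pkey_inj p₁ p₂)

lemma mkPref_lt_iff (p₁ p₂ u v : Option O) :
    (mkPref p₁ p₂).lt u v ↔ pkey p₁ p₂ u < pkey p₁ p₂ v := Iff.rfl

lemma mk_top (p₁ p₂ v : Option O) : ¬ (mkPref p₁ p₂).lt p₁ v := by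
  rw [mkPref_lt_iff]
  have k1 := (Fintype.equivFin (Option O) v).is_lt
  have k2 := (Fintype.equivFin (Option O) p₁).is_lt
  have k3 := (Fintype.equivFin (Option O) p₂).is_lt
  have k4 := (Fintype.equivFin (Option O) (none : Option O)).is_lt
  have hc : Fintype.card (Option O) = Fintype.card O + 1 := Fintype.card_option
  unfold pkey; split_ifs <;> first | omega | simp_all

lemma mk_lt_top (p₁ p₂ v : Option O) (h : v ≠ p₁) : (mkPref p₁ p₂).lt v p₁ := by
  rw [mkPref_lt_iff]
  have k1 := (Fintype.equivFin (Option O) v).is_lt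
  have k2 := (Fintype.equivFin (Option O) p₁).is_lt
  have k3 := (Fintype.equivFin (Option O) p₂).is_lt
  have k4 := (Fintype.equivFin (Option O) (none : Option O)).is_lt
  have hc : Fintype.card (Option O) = Fintype.card O + 1 := Fintype.card_option
  unfold pkey; split_ifs <;> first | omega | simp_all

lemma mk_lt_snd (p₁ p₂ v : Option O) (h1 : v ≠ p₁) (h2 : v ≠ p₂) :
    (mkPref p₁ p₂).lt v p₂ := by
  rw [mkPref_lt_iff]
  have k1 := (Fintype.equivFin (Option O) v).is_lt
  have k2 := (Fintype.equivFin (Option O) p₁).is_lt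
  have k3 := (Fintype.equivFin (Option O) p₂).is_lt
  have k4 := (Fintype.equivFin (Option O) (none : Option O)).is_lt
  have hc : Fintype.card (Option O) = Fintype.card O + 1 := Fintype.card_option
  unfold pkey; split_ifs <;> first | omega | simp_all

lemma mk_lt_none (p₁ p₂ v : Option O) (h1 : v ≠ p₁) (h2 : v ≠ p₂) (h3 : v ≠ none) :
    (mkPref p₁ p₂).lt v none := by
  rw [mkPref_lt_iff]
  have k1 := (Fintype.equivFin (Option O) v).is_lt
  have k2 := (Fintype.equivFin (Option O) p₁).is_lt
  have k3 := (Fintype.equivFin (Option O) p₂).is_lt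
  have k4 := (Fintype.equivFin (Option O) (none : Option O)).is_lt
  have hc : Fintype.card (Option O) = Fintype.card O + 1 := Fintype.card_option
  unfold pkey; split_ifs <;> first | omega | simp_all

lemma mk_snd_lt (p₁ p₂ v : Option O) (h : p₂ ≠ p₁) (hlt : (mkPref p₁ p₂).lt p₂ v) :
    v = p₁ := by
  rw [mkPref_lt_iff] at hlt
  have k1 := (Fintype.equivFin (Option O) v).is_lt
  have k2 := (Fintype.equivFin (Option O) p₁).is_lt
  have k3 := (Fintype.equivFin (Option O) p₂).is_lt
  have k4 := (Fintype.equivFin (Option O) (none : Option O)).is_lt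
  have hc : Fintype.card (Option O) = Fintype.card O + 1 := Fintype.card_option
  by_contra hne
  unfold pkey at hlt
  split_ifs at hlt <;> first | omega | simp_all

lemma mk_none_lt (p₁ p₂ v : Option O) (h1 : (none : Option O) ≠ p₁)
    (h2 : (none : Option O) ≠ p₂) (hlt : (mkPref p₁ p₂).lt none v) :
    v = p₁ ∨ v = p₂ := by
  rw [mkPref_lt_iff] at hlt
  have k1 := (Fintype.equivFin (Option O) v).is_lt
  have k2 := (Fintype.equivFin (Option O) p₁).is_lt
  have k3 := (Fintype.equivFin (Option O) p₂).is_lt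
  have k4 := (Fintype.equivFin (Option O) (none : Option O)).is_lt
  have hc : Fintype.card (Option O) = Fintype.card O + 1 := Fintype.card_option
  by_contra hne
  push_neg at hne
  unfold pkey at hlt
  split_ifs at hlt <;> first | omega | simp_all

/-! ### Sum helpers -/

lemma sum_filter_le_single (w : I → ℝ) (hw : ∀ i, 0 < w i) (p : I → Prop) (i : I)
    (h : ∀ j, p j → j = i) :
    (∑ j ∈ Finset.univ.filter p, w j) ≤ w i := by
  have hsub : (Finset.univ.filter p) ⊆ {i} := by
    intro j hj
    rw [Finset.mem_filter] at hj
    simp [h j hj.2]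
  calc (∑ j ∈ Finset.univ.filter p, w j) ≤ ∑ j ∈ ({i} : Finset I), w j :=
        Finset.sum_le_sum_of_subset_of_nonneg hsub (fun j _ _ => (hw j).le)
    _ = w i := by simp

lemma single_le_sum_filter (w : I → ℝ) (hw : ∀ i, 0 < w i) (p : I → Prop) (i : I)
    (h : p i) : w i ≤ ∑ j ∈ Finset.univ.filter p, w j := by
  refine Finset.single_le_sum (fun j _ => (hw j).le) ?_
  rw [Finset.mem_filter]; exact ⟨Finset.mem_univ _, h⟩

lemma pair_le_sum_filter (w : I → ℝ) (hw : ∀ i, 0 < w i) (p : I → Prop) (i j : I)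
    (hij : i ≠ j) (hi : p i) (hj : p j) :
    w i + w j ≤ ∑ k ∈ Finset.univ.filter p, w k := by
  have hsub : ({i, j} : Finset I) ⊆ Finset.univ.filter p := by
    intro k hk
    rw [Finset.mem_filter]
    rcases Finset.mem_insert.mp hk with rfl | hk
    · exact ⟨Finset.mem_univ _, hi⟩
    · rw [Finset.mem_singleton.mp hk]; exact ⟨Finset.mem_univ _, hj⟩
  calc w i + w j = ∑ k ∈ ({i, j} : Finset I), w k := (Finset.sum_pair hij).symm
    _ ≤ ∑ k ∈ Finset.univ.filter p, w k :=
        Finset.sum_le_sum_of_subset_of_nonneg hsub (fun k _ _ => (hw k).le)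

lemma sum_filter_nonneg (w : I → ℝ) (hw : ∀ i, 0 < w i) (p : I → Prop) :
    0 ≤ ∑ j ∈ Finset.univ.filter p, w j :=
  Finset.sum_nonneg (fun j _ => (hw j).le)

lemma sum_filter_zero (w : I → ℝ) (p : I → Prop) (h : ∀ j, ¬ p j) :
    (∑ j ∈ Finset.univ.filter p, w j) = 0 := by
  rw [Finset.filter_false_of_mem (fun j _ => h j)]
  simp

/-! ### Matching helpers -/

lemma cap_unique (q : O → ℕ) (c : O) (hqc : q c = 1) (μ : I → Option O)
    (hμ : IsMatching q μ) (i j : I) (hij : i ≠ j) (hi : μ i = some c) :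
    μ j ≠ some c := by
  intro hj
  have hsub : ({i, j} : Finset I) ⊆ Finset.univ.filter (fun k => μ k = some c) := by
    intro k hk
    rw [Finset.mem_filter]
    rcases Finset.mem_insert.mp hk with rfl | hk
    · exact ⟨Finset.mem_univ _, hi⟩
    · rw [Finset.mem_singleton.mp hk]; exact ⟨Finset.mem_univ _, hj⟩
  have h2 : ({i, j} : Finset I).card = 2 := Finset.card_pair hij
  have h3 := Finset.card_le_card hsub
  have h4 := hμ c
  omega

lemma isMatching_pair (q : O → ℕ) (hq : ValidCaps q) (α γ : I) (hαγ : α ≠ γ)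
    (a b : O) (hab : a ≠ b) :
    IsMatching q (fun i => if i = α then some a else if i = γ then some b else none) := by
  intro c
  rcases eq_or_ne c a with hca | hca
  · have hsub : (Finset.univ.filter
        fun i : I => (if i = α then some a else if i = γ then some b else none) = some c)
        ⊆ {α} := by
      intro j hj
      rw [Finset.mem_filter] at hj
      have hj2 := hj.2
      simp only [Finset.mem_singleton]
      split_ifs at hj2 with h1 h2 <;> simp_all
    calc _ ≤ ({α} : Finset I).card := Finset.card_le_card hsub
      _ ≤ q c := by simpa using hq c
  rcases eq_or_ne c b with hcb | hcb
  · have hsub : (Finset.univ.filter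
        fun i : I => (if i = α then some a else if i = γ then some b else none) = some c)
        ⊆ {γ} := by
      intro j hj
      rw [Finset.mem_filter] at hj
      have hj2 := hj.2
      simp only [Finset.mem_singleton]
      split_ifs at hj2 with h1 h2 <;> simp_all
    calc _ ≤ ({γ} : Finset I).card := Finset.card_le_card hsub
      _ ≤ q c := by simpa using hq c
  · have hsub : (Finset.univ.filter
        fun i : I => (if i = α then some a else if i = γ then some b else none) = some c)
        ⊆ (∅ : Finset I) := by
      intro j hj
      rw [Finset.mem_filter] at hj
      have hj2 := hj.2
      exfalso
      split_ifs at hj2 with h1 h2 <;> simp_all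
    calc _ ≤ (∅ : Finset I).card := Finset.card_le_card hsub
      _ ≤ q c := by simp

/-! ### Nash equilibrium transfer -/

lemma nashEq_transfer (ψ : Mechanism I O) (P P2 : I → LinearOrder (Option O))
    (q : O → ℕ) (P' : I → LinearOrder (Option O)) (h : NashEq ψ P q P')
    (hUC : ∀ i v, (P2 i).lt (ψ P' q i) v → (P i).lt (ψ P' q i) v) :
    NashEq ψ P2 q P' :=
  fun i P'' hpref => h i P'' (hUC i _ hpref)

end Aux

section Aux2

variable {I O : Type} [Fintype I] [Fintype O]

/-- If a Nash-equilibrium outcome of a w-popular-in-equilibrium mechanism is weakly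
Pareto dominated (w.r.t. the true preferences) by another matching, we get a contradiction. -/
lemma pareto_step (w : I → ℝ) (hw : ∀ i, 0 < w i) (ψ : Mechanism I O)
    (hwpe : WPopularInEquilibrium w ψ)
    (P : I → LinearOrder (Option O)) (q : O → ℕ) (hq : ValidCaps q)
    (P' : I → LinearOrder (Option O)) (hne : NashEq ψ P q P')
    (τ : I → Option O) (hτ : IsMatching q τ)
    (hdom : ∀ i, τ i = ψ P' q i ∨ (P i).lt (ψ P' q i) (τ i))
    (hneq : τ ≠ ψ P' q) : False := by
  set μ := ψ P' q with hμ
  set P2 : I → LinearOrder (Option O) := fun i => mkPref (τ i) (μ i) with hP2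
  have htrans : NashEq ψ P2 q P' := by
    refine nashEq_transfer ψ P P2 q P' hne ?_
    intro i v hlt
    rw [← hμ] at hlt ⊢
    by_cases hti : τ i = μ i
    · rw [hP2] at hlt
      exact absurd hlt (by rw [← hti]; exact mk_top _ _ _)
    · have hv : v = τ i := mk_snd_lt (τ i) (μ i) v (fun hh => hti hh.symm) hlt
      rw [hv]
      rcases hdom i with h | h
      · exact absurd h hti
      · exact h
  have hτpop : WPopular w P2 q τ := by
    refine ⟨hτ, ?_⟩
    intro μ' _ hmore
    unfold MoreWPopular at hmore
    have h0 : (∑ i ∈ Finset.univ.filter fun i => Prefers (P2 i) (μ' i) (τ i), w i) = 0 := by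
      apply sum_filter_zero
      intro j hj
      exact mk_top (τ j) (μ j) (μ' j) hj
    have h1 := sum_filter_nonneg w hw (fun j : I => Prefers (P2 j) (τ j) (μ' j))
    rw [h0] at hmore
    linarith
  have hpop : WPopular w P2 q μ := hwpe P2 q hq P' htrans ⟨τ, hτpop⟩
  apply hpop.2 τ hτ
  unfold MoreWPopular
  obtain ⟨i₀, hi₀⟩ := Function.ne_iff.mp hneq
  have hL : (∑ j ∈ Finset.univ.filter fun j => Prefers (P2 j) (μ j) (τ j), w j) = 0 := by
    apply sum_filter_zero
    intro j hj
    exact mk_top (τ j) (μ j) (μ j) hj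
  have hR : w i₀ ≤ ∑ i ∈ Finset.univ.filter fun i => Prefers (P2 i) (τ i) (μ i), w i := by
    apply single_le_sum_filter w hw _ i₀
    show (P2 i₀).lt (μ i₀) (τ i₀)
    exact mk_lt_top (τ i₀) (μ i₀) (μ i₀) (fun hh => hi₀ hh.symm)
  rw [hL]
  have := hw i₀
  linarith

/-- Certificate B: if `w α ≤ w β`, the matching (β:a, γ:b) is w-popular at the Π-profile. -/
lemma certB (w : I → ℝ) (hw : ∀ i, 0 < w i)
    (α β γ : I) (hαβ : α ≠ β) (hαγ : α ≠ γ) (hβγ : β ≠ γ) (a b : O) (hab : a ≠ b)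
    (q : O → ℕ) (hq : ValidCaps q) (hqa : q a = 1)
    (P2 : I → LinearOrder (Option O))
    (hPα : P2 α = mkPref (some a) none) (hPβ : P2 β = mkPref (some a) (some b))
    (hPγ : P2 γ = mkPref (some b) none)
    (hPo : ∀ j, j ≠ α → j ≠ β → j ≠ γ → P2 j = mkPref none none)
    (hwαβ : w α ≤ w β) :
    WPopular w P2 q (fun i => if i = β then some a else if i = γ then some b else none) := by
  set ν : I → Option O := fun i => if i = β then some a else if i = γ then some b else none
    with hν
  have hνβ : ν β = some a := by simp [hν]
  have hνγ : ν γ = some b := by simp [hν, Ne.symm hβγ]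
  have hνα : ν α = none := by simp [hν, hαβ, hαγ]
  have hνo : ∀ j, j ≠ β → j ≠ γ → ν j = none := by
    intro j h1 h2; simp [hν, h1, h2]
  have hνmatch : IsMatching q ν := isMatching_pair q hq β γ hβγ a b hab
  refine ⟨hνmatch, ?_⟩
  intro μ' hμ' hmore
  unfold MoreWPopular at hmore
  have hstep : ∀ j, Prefers (P2 j) (μ' j) (ν j) → j = α ∧ μ' j = some a := by
    intro j hj
    unfold Prefers at hj
    by_cases hjβ : j = β
    · rw [hjβ, hPβ, hνβ] at hj
      exact absurd hj (mk_top _ _ _)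
    by_cases hjγ : j = γ
    · rw [hjγ, hPγ, hνγ] at hj
      exact absurd hj (mk_top _ _ _)
    by_cases hjα : j = α
    · rw [hjα, hPα, hνα] at hj
      refine ⟨hjα, ?_⟩
      rw [hjα]
      exact mk_snd_lt (some a) none (μ' α) (by simp) hj
    · rw [hPo j hjα hjβ hjγ, hνo j hjβ hjγ] at hj
      exact absurd hj (mk_top _ _ _)
  by_cases hαg : Prefers (P2 α) (μ' α) (ν α)
  · have hμα : μ' α = some a := (hstep α hαg).2
    have hμβ : μ' β ≠ some a := cap_unique q a hqa μ' hμ' α β hαβ hμα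
    have hβloss : Prefers (P2 β) (ν β) (μ' β) := by
      show (P2 β).lt (μ' β) (ν β)
      rw [hPβ, hνβ]
      exact mk_lt_top (some a) (some b) (μ' β) hμβ
    have h1 : (∑ i ∈ Finset.univ.filter fun i => Prefers (P2 i) (μ' i) (ν i), w i) ≤ w α :=
      sum_filter_le_single w hw _ α (fun j hj => (hstep j hj).1)
    have h2 : w β ≤ ∑ j ∈ Finset.univ.filter fun j => Prefers (P2 j) (ν j) (μ' j), w j :=
      single_le_sum_filter w hw _ β hβloss
    linarith
  · have h0 : (∑ i ∈ Finset.univ.filter fun i => Prefers (P2 i) (μ' i) (ν i), w i) = 0 := by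
      apply sum_filter_zero
      intro j hj
      exact hαg ((hstep j hj).1 ▸ hj)
    have h1 := sum_filter_nonneg w hw (fun j : I => Prefers (P2 j) (ν j) (μ' j))
    rw [h0] at hmore
    linarith

/-- Certificate A: if `w β ≤ w α` and `w β ≤ w γ`, the matching (α:a, γ:b) is w-popular. -/
lemma certA (w : I → ℝ) (hw : ∀ i, 0 < w i)
    (α β γ : I) (hαβ : α ≠ β) (hαγ : α ≠ γ) (hβγ : β ≠ γ) (a b : O) (hab : a ≠ b)
    (q : O → ℕ) (hq : ValidCaps q) (hqa : q a = 1) (hqb : q b = 1)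
    (P2 : I → LinearOrder (Option O))
    (hPα : P2 α = mkPref (some a) none) (hPβ : P2 β = mkPref (some a) (some b))
    (hPγ : P2 γ = mkPref (some b) none)
    (hPo : ∀ j, j ≠ α → j ≠ β → j ≠ γ → P2 j = mkPref none none)
    (hwβα : w β ≤ w α) (hwβγ : w β ≤ w γ) :
    WPopular w P2 q (fun i => if i = α then some a else if i = γ then some b else none) := by
  set ν : I → Option O := fun i => if i = α then some a else if i = γ then some b else none
    with hν
  have hνα : ν α = some a := by simp [hν]
  have hνγ : ν γ = some b := by simp [hν, Ne.symm hαγ]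
  have hνβ : ν β = none := by simp [hν, Ne.symm hαβ, hβγ]
  have hνo : ∀ j, j ≠ α → j ≠ γ → ν j = none := by
    intro j h1 h2; simp [hν, h1, h2]
  have hνmatch : IsMatching q ν := isMatching_pair q hq α γ hαγ a b hab
  refine ⟨hνmatch, ?_⟩
  intro μ' hμ' hmore
  unfold MoreWPopular at hmore
  have hstep : ∀ j, Prefers (P2 j) (μ' j) (ν j) →
      j = β ∧ (μ' j = some a ∨ μ' j = some b) := by
    intro j hj
    unfold Prefers at hj
    by_cases hjα : j = α
    · rw [hjα, hPα, hνα] at hj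
      exact absurd hj (mk_top _ _ _)
    by_cases hjγ : j = γ
    · rw [hjγ, hPγ, hνγ] at hj
      exact absurd hj (mk_top _ _ _)
    by_cases hjβ : j = β
    · rw [hjβ, hPβ, hνβ] at hj
      refine ⟨hjβ, ?_⟩
      rw [hjβ]
      exact mk_none_lt (some a) (some b) (μ' β) (by simp) (by simp) hj
    · rw [hPo j hjα hjβ hjγ, hνo j hjα hjγ] at hj
      exact absurd hj (mk_top _ _ _)
  by_cases hβg : Prefers (P2 β) (μ' β) (ν β)
  · have h1 : (∑ i ∈ Finset.univ.filter fun i => Prefers (P2 i) (μ' i) (ν i), w i) ≤ w β :=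
      sum_filter_le_single w hw _ β (fun j hj => (hstep j hj).1)
    rcases (hstep β hβg).2 with hμβ | hμβ
    · have hμα : μ' α ≠ some a := cap_unique q a hqa μ' hμ' β α (Ne.symm hαβ) hμβ
      have hαloss : Prefers (P2 α) (ν α) (μ' α) := by
        show (P2 α).lt (μ' α) (ν α)
        rw [hPα, hνα]
        exact mk_lt_top (some a) none (μ' α) hμα
      have h2 : w α ≤ ∑ j ∈ Finset.univ.filter fun j => Prefers (P2 j) (ν j) (μ' j), w j :=
        single_le_sum_filter w hw _ α hαloss
      linarith
    · have hμγ : μ' γ ≠ some b := cap_unique q b hqb μ' hμ' β γ hβγ hμβ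
      have hγloss : Prefers (P2 γ) (ν γ) (μ' γ) := by
        show (P2 γ).lt (μ' γ) (ν γ)
        rw [hPγ, hνγ]
        exact mk_lt_top (some b) none (μ' γ) hμγ
      have h2 : w γ ≤ ∑ j ∈ Finset.univ.filter fun j => Prefers (P2 j) (ν j) (μ' j), w j :=
        single_le_sum_filter w hw _ γ hγloss
      linarith
  · have h0 : (∑ i ∈ Finset.univ.filter fun i => Prefers (P2 i) (μ' i) (ν i), w i) = 0 := by
      apply sum_filter_zero
      intro j hj
      exact hβg ((hstep j hj).1 ▸ hj)
    have h1 := sum_filter_nonneg w hw (fun j : I => Prefers (P2 j) (ν j) (μ' j))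
    rw [h0] at hmore
    linarith

end Aux2

section Aux3

variable {I O : Type} [Fintype I] [Fintype O]

/-- The final contradiction: an equilibrium outcome of the form (α:a, β:b, rest:∅) at the
base profile, combined with the weight conditions, contradicts w-popularity in equilibrium. -/
lemma final_step (w : I → ℝ) (hw : ∀ i, 0 < w i) (ψ : Mechanism I O)
    (hwpe : WPopularInEquilibrium w ψ)
    (α β γ : I) (hαβ : α ≠ β) (hαγ : α ≠ γ) (hβγ : β ≠ γ)
    (a b : O) (hab : a ≠ b)
    (q : O → ℕ) (hq : ValidCaps q) (hqa : q a = 1) (hqb : q b = 1)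
    (P : I → LinearOrder (Option O))
    (hPγbase : P γ = mkPref (some a) (some b))
    (P' : I → LinearOrder (Option O)) (hne : NashEq ψ P q P')
    (hμmatch : IsMatching q (ψ P' q))
    (hμα : ψ P' q α = some a) (hμβ : ψ P' q β = some b) (hμγ : ψ P' q γ = none)
    (hμo : ∀ j, j ≠ α → j ≠ β → j ≠ γ → ψ P' q j = none)
    (hPo : ∀ j, j ≠ α → j ≠ β → j ≠ γ → P j = mkPref none none)
    (hPβbase : P β = mkPref (some a) (some b))
    (hF1 : w α < w β + w γ) (hF2 : w β ≤ w γ ∨ w α ≤ w β) : False := by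
  classical
  set μ := ψ P' q with hμdef
  set P2 : I → LinearOrder (Option O) := fun i =>
    if i = α then mkPref (some a) none
    else if i = γ then mkPref (some b) none
    else P i with hP2
  have hP2α : P2 α = mkPref (some a) none := by simp [hP2]
  have hP2γ : P2 γ = mkPref (some b) none := by simp [hP2, Ne.symm hαγ]
  have hP2β : P2 β = mkPref (some a) (some b) := by
    rw [hP2]
    simp only [if_neg (Ne.symm hαβ), if_neg hβγ]
    exact hPβbase
  have hP2o : ∀ j, j ≠ α → j ≠ β → j ≠ γ → P2 j = mkPref none none := by
    intro j h1 h2 h3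
    rw [hP2]
    simp only [if_neg h1, if_neg h3]
    exact hPo j h1 h2 h3
  -- Nash equilibrium transfers to the shrunk profile P2
  have hne2 : NashEq ψ P2 q P' := by
    refine nashEq_transfer ψ P P2 q P' hne ?_
    intro i v hlt
    rw [← hμdef] at hlt ⊢
    by_cases hiα : i = α
    · rw [hiα, hP2α, hμα] at hlt
      exact absurd hlt (mk_top _ _ _)
    by_cases hiγ : i = γ
    · rw [hiγ, hP2γ, hμγ] at hlt
      have hv : v = some b := mk_snd_lt (some b) none v (by simp) hlt
      rw [hiγ, hμγ, hv, hPγbase]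
      exact mk_lt_snd (some a) (some b) none (by simp) (by simp)
    · have : P2 i = P i := by rw [hP2]; simp [hiα, hiγ]
      rwa [this] at hlt
  -- a w-popular matching exists at (P2, q)
  have hex : ∃ ν, WPopular w P2 q ν := by
    rcases le_total (w α) (w β) with hle | hle
    · exact ⟨_, certB w hw α β γ hαβ hαγ hβγ a b hab q hq hqa P2 hP2α hP2β hP2γ hP2o hle⟩
    · rcases hF2 with h2 | h2
      · exact ⟨_, certA w hw α β γ hαβ hαγ hβγ a b hab q hq hqa hqb P2 hP2α hP2β hP2γ hP2o
          hle h2⟩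
      · exact ⟨_, certB w hw α β γ hαβ hαγ hβγ a b hab q hq hqa P2 hP2α hP2β hP2γ hP2o h2⟩
  have hpop : WPopular w P2 q μ := hwpe P2 q hq P' hne2 hex
  -- but μ is beaten at P2 by the rotation ρ = (β:a, γ:b)
  set ρ : I → Option O := fun i => if i = β then some a else if i = γ then some b else none
    with hρ
  have hρβ : ρ β = some a := by simp [hρ]
  have hρ'γ : ρ γ = some b := by simp [hρ, Ne.symm hβγ]
  have hρα : ρ α = none := by simp [hρ, hαβ, hαγ]
  have hρmatch : IsMatching q ρ := isMatching_pair q hq β γ hβγ a b hab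
  apply hpop.2 ρ hρmatch
  unfold MoreWPopular
  -- losses (those preferring μ) are contained in {α}
  have hlose : ∀ j, Prefers (P2 j) (μ j) (ρ j) → j = α := by
    intro j hj
    unfold Prefers at hj
    by_cases hjβ : j = β
    · rw [hjβ, hP2β, hρβ] at hj
      exact absurd hj (mk_top _ _ _)
    by_cases hjγ : j = γ
    · rw [hjγ, hP2γ, hρ'γ] at hj
      exact absurd hj (mk_top _ _ _)
    by_cases hjα : j = α
    · exact hjα
    · rw [hP2o j hjα hjβ hjγ] at hj
      have : ρ j = none := by simp [hρ, hjβ, hjγ]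
      rw [this] at hj
      exact absurd hj (mk_top _ _ _)
  have hL : (∑ j ∈ Finset.univ.filter fun j => Prefers (P2 j) (μ j) (ρ j), w j) ≤ w α :=
    sum_filter_le_single w hw _ α hlose
  -- gains (those preferring ρ) contain both β and γ
  have hgβ : Prefers (P2 β) (ρ β) (μ β) := by
    show (P2 β).lt (μ β) (ρ β)
    rw [hP2β, hρβ, hμβ]
    exact mk_lt_top (some a) (some b) (some b) (by simp [hab.symm])
  have hgγ : Prefers (P2 γ) (ρ γ) (μ γ) := by
    show (P2 γ).lt (μ γ) (ρ γ)
    rw [hP2γ, hρ'γ, hμγ]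
    exact mk_lt_top (some b) none none (by simp)
  have hG : w β + w γ ≤ ∑ i ∈ Finset.univ.filter fun i => Prefers (P2 i) (ρ i) (μ i), w i :=
    pair_le_sum_filter w hw _ β γ hβγ hgβ hgγ
  linarith

end Aux3

section Aux4

variable {I : Type} [Fintype I]

/-- Extraction of the key triple of agents from «neither distinct nor essentially distinct». -/
lemma extract_triple (hI : 3 ≤ Fintype.card I)
    (w : I → ℝ) (hw : ∀ i, 0 < w i) (e : Fin (Fintype.card I) ≃ I) (he : DecreasingEnum w e)
    (hnd : ¬ DistinctWeights w) (hned : ¬ EssentiallyDistinct w e) :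
    ∃ x y z : I, x ≠ y ∧ x ≠ z ∧ y ≠ z ∧ w y = w z ∧ w x < w y + w z := by
  have hn : 3 ≤ Fintype.card I := hI
  rw [DistinctWeights, Function.not_injective_iff] at hnd
  obtain ⟨p, p', hpp', hpne⟩ := hnd
  have hJK : e.symm p ≠ e.symm p' := fun h => hpne (by
    have := congrArg e h
    rwa [e.apply_symm_apply, e.apply_symm_apply] at this)
  have weq0 : w (e (e.symm p)) = w (e (e.symm p')) := by
    rw [e.apply_symm_apply, e.apply_symm_apply]; exact hpp'
  obtain ⟨J, K, hJKlt, weq⟩ : ∃ J K : Fin (Fintype.card I), J < K ∧ w (e J) = w (e K) := by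
    rcases lt_or_gt_of_ne hJK with h | h
    · exact ⟨_, _, h, weq0⟩
    · exact ⟨_, _, h, weq0.symm⟩
  by_cases hC1 : ∀ j k : Fin (Fintype.card I), j < k → (k : ℕ) + 2 ≤ Fintype.card I →
      w (e j) ≠ w (e k)
  · -- K must be the last index, so the last two weights are equal
    have hKval : (K : ℕ) = Fintype.card I - 1 := by
      by_contra hKv
      have hK2 : (K : ℕ) + 2 ≤ Fintype.card I := by
        have := K.is_lt
        omega
      exact hC1 J K hJKlt hK2 weq
    set k₀ : Fin (Fintype.card I) := ⟨Fintype.card I - 2, by omega⟩ with hk₀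
    set lst : Fin (Fintype.card I) := ⟨Fintype.card I - 1, by omega⟩ with hlst
    have hKl : K = lst := by
      apply Fin.ext
      rw [hKval]
    have hJk₀ : J ≤ k₀ := by
      have h1 : (J : ℕ) < (K : ℕ) := hJKlt
      rw [Fin.le_def]
      simp only [hk₀]
      omega
    have e1 : w (e k₀) ≤ w (e J) := he J k₀ hJk₀
    have e2 : w (e lst) ≤ w (e k₀) := he k₀ lst (by rw [Fin.le_def]; simp only [hk₀, hlst]; omega)
    have weq' : w (e J) = w (e lst) := by rw [← hKl]; exact weq
    have hk₀lst : w (e k₀) = w (e lst) := le_antisymm (by linarith) e2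
    have hC2 : ∀ j k : Fin (Fintype.card I), (j : ℕ) + 2 = Fintype.card I →
        (k : ℕ) + 1 = Fintype.card I → w (e j) = w (e k) := by
      intro j k hj hk
      have hj' : j = k₀ := by apply Fin.ext; simp only [hk₀]; omega
      have hk' : k = lst := by apply Fin.ext; simp only [hlst]; omega
      rw [hj', hk']
      exact hk₀lst
    by_cases hC3 : ∀ j k l : Fin (Fintype.card I), (j : ℕ) + 3 = Fintype.card I →
        (k : ℕ) + 2 = Fintype.card I → (l : ℕ) + 1 = Fintype.card I →
        w (e k) + w (e l) ≤ w (e j)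
    · exact absurd ⟨hC1, hC2, hC3⟩ hned
    · push_neg at hC3
      obtain ⟨j, k, l, hj, hk, hl, hlt⟩ := hC3
      refine ⟨e j, e k, e l, ?_, ?_, ?_, ?_, hlt⟩
      · intro h
        have := e.injective h
        have : (j : ℕ) = (k : ℕ) := by rw [this]
        omega
      · intro h
        have := e.injective h
        have : (j : ℕ) = (l : ℕ) := by rw [this]
        omega
      · intro h
        have := e.injective h
        have : (k : ℕ) = (l : ℕ) := by rw [this]
        omega
      · have hk' : k = k₀ := by apply Fin.ext; simp only [hk₀]; omega
        have hl' : l = lst := by apply Fin.ext; simp only [hlst]; omega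
        rw [hk', hl']
        exact hk₀lst
  · push_neg at hC1
    obtain ⟨j, k, hjk, hk2, heq⟩ := hC1
    set lst : Fin (Fintype.card I) := ⟨Fintype.card I - 1, by omega⟩ with hlst
    have hjklt : (j : ℕ) < (k : ℕ) := hjk
    refine ⟨e lst, e j, e k, ?_, ?_, ?_, heq, ?_⟩
    · intro h
      have := e.injective h
      have : (lst : ℕ) = (j : ℕ) := by rw [this]
      simp only [hlst] at this
      omega
    · intro h
      have := e.injective h
      have : (lst : ℕ) = (k : ℕ) := by rw [this]
      simp only [hlst] at this
      omega
    · intro h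
      have := e.injective h
      have : (j : ℕ) = (k : ℕ) := by rw [this]
      omega
    · have h1 : w (e lst) ≤ w (e k) := he k lst (by rw [Fin.le_def]; simp only [hlst]; omega)
      have h2 := hw (e j)
      linarith [heq]

end Aux4

/-- If the weights are neither distinct nor essentially distinct, then no
mechanism admitting a Nash equilibrium at every problem is w-popular in equilibrium. -/
theorem stmt15 {I O : Type} [Fintype I] [Fintype O]
    (hI : 3 ≤ Fintype.card I) (hIO : Fintype.card I ≤ Fintype.card O)
    (w : I → ℝ) (hw : ∀ i, 0 < w i)
    (e : Fin (Fintype.card I) ≃ I) (he : DecreasingEnum w e)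
    (hnd : ¬ DistinctWeights w) (hned : ¬ EssentiallyDistinct w e) :
    ¬ ∃ ψ : Mechanism I O, IsMechanism ψ ∧ AdmitsNash ψ ∧ WPopularInEquilibrium w ψ := by
  rintro ⟨ψ, hmech, hadm, hwpe⟩
  obtain ⟨x, y, z, hxy, hxz, hyz', hyzw, hxw⟩ := extract_triple hI w hw e he hnd hned
  have hO2 : 1 < Fintype.card O := by omega
  obtain ⟨a, b, hab⟩ := Fintype.exists_pair_of_one_lt_card hO2
  set q : O → ℕ := fun _ => 1 with hqdef
  have hq : ValidCaps q := fun _ => le_refl 1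
  have hqa : q a = 1 := rfl
  have hqb : q b = 1 := rfl
  set P : I → LinearOrder (Option O) := fun i =>
    if i = x ∨ i = y ∨ i = z then mkPref (some a) (some b) else mkPref none none with hP
  have hPxyz : ∀ i, (i = x ∨ i = y ∨ i = z) → P i = mkPref (some a) (some b) := by
    intro i hi; rw [hP]; simp only [if_pos hi]
  have hPout : ∀ i, ¬(i = x ∨ i = y ∨ i = z) → P i = mkPref none none := by
    intro i hi; rw [hP]; simp only [if_neg hi]
  obtain ⟨P', hne⟩ := hadm P q hq
  set μ := ψ P' q with hμdef
  have hμmatch : IsMatching q μ := hmech P' q hq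
  -- Fact 1: in the equilibrium outcome no agent holds an object unacceptable to her
  have fact1 : ∀ i, μ i = none ∨
      ((i = x ∨ i = y ∨ i = z) ∧ (μ i = some a ∨ μ i = some b)) := by
    intro i
    by_contra hcon
    push_neg at hcon
    obtain ⟨h0, hrest⟩ := hcon
    apply pareto_step w hw ψ hwpe P q hq P' hne (Function.update μ i none) ?_ ?_ ?_
    · intro c
      refine le_trans (Finset.card_le_card ?_) (hμmatch c)
      intro j hj
      rw [Finset.mem_filter] at hj ⊢
      refine ⟨hj.1, ?_⟩
      have hj2 := hj.2
      rcases eq_or_ne j i with rfl | hji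
      · rw [Function.update_self] at hj2
        exact absurd hj2 (by simp)
      · rwa [Function.update_of_ne hji] at hj2
    · intro j
      rcases eq_or_ne j i with rfl | hji
      · right
        rw [← hμdef, Function.update_self]
        by_cases hxyz : j = x ∨ j = y ∨ j = z
        · rw [hPxyz j hxyz]
          exact mk_lt_none (some a) (some b) (μ j) (hrest hxyz).1 (hrest hxyz).2 h0
        · rw [hPout j hxyz]
          exact mk_lt_top none none (μ j) h0
      · left
        rw [← hμdef]
        exact Function.update_of_ne hji _ _
    · intro hE
      have h1 := congrFun hE i
      rw [Function.update_self, ← hμdef] at h1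
      exact h0 h1.symm
  have hout : ∀ j, ¬(j = x ∨ j = y ∨ j = z) → μ j = none := by
    intro j hj
    rcases fact1 j with h0 | ⟨hj', _⟩
    · exact h0
    · exact absurd hj' hj
  -- Fact 2: some agent among x, y, z holds a
  have fact2 : ∃ h, (h = x ∨ h = y ∨ h = z) ∧ μ h = some a := by
    by_contra hcon
    push_neg at hcon
    have hnowhere : ∀ i, μ i ≠ some a := by
      intro i
      rcases fact1 i with h0 | ⟨hx', _⟩
      · rw [h0]; simp
      · exact hcon i hx'
    apply pareto_step w hw ψ hwpe P q hq P' hne (Function.update μ x (some a)) ?_ ?_ ?_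
    · intro c
      rcases eq_or_ne c a with rfl | hca
      · refine le_trans (Finset.card_le_card (?_ : _ ⊆ ({x} : Finset I))) (by simpa using hq c)
        intro j hj
        rw [Finset.mem_filter] at hj
        have hj2 := hj.2
        rw [Finset.mem_singleton]
        rcases eq_or_ne j x with rfl | hjx
        · rfl
        · rw [Function.update_of_ne hjx] at hj2
          exact absurd hj2 (hnowhere j)
      · refine le_trans (Finset.card_le_card ?_) (hμmatch c)
        intro j hj
        rw [Finset.mem_filter] at hj ⊢
        refine ⟨hj.1, ?_⟩
        have hj2 := hj.2
        rcases eq_or_ne j x with rfl | hjx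
        · rw [Function.update_self] at hj2
          exact absurd (Option.some_inj.mp hj2) hca.symm
        · rwa [Function.update_of_ne hjx] at hj2
    · intro j
      rcases eq_or_ne j x with rfl | hjx
      · right
        rw [← hμdef, Function.update_self, hPxyz j (Or.inl rfl)]
        exact mk_lt_top (some a) (some b) (μ j) (hnowhere j)
      · left
        rw [← hμdef]
        exact Function.update_of_ne hjx _ _
    · intro hE
      have h1 := congrFun hE x
      rw [Function.update_self, ← hμdef] at h1
      exact hnowhere x h1.symm
  obtain ⟨h, hhxyz, hμh⟩ := fact2
  -- Fact 3: some other agent among x, y, z holds b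
  have fact3 : ∃ g, (g = x ∨ g = y ∨ g = z) ∧ g ≠ h ∧ μ g = some b := by
    obtain ⟨g₀, hg₀xyz, hg₀h⟩ : ∃ g₀, (g₀ = x ∨ g₀ = y ∨ g₀ = z) ∧ g₀ ≠ h := by
      by_cases hhx : h = x
      · exact ⟨y, Or.inr (Or.inl rfl), by rw [hhx]; exact Ne.symm hxy⟩
      · exact ⟨x, Or.inl rfl, fun hE => hhx hE.symm⟩
    by_contra hcon
    push_neg at hcon
    have hnob : ∀ i, μ i ≠ some b := by
      intro i
      rcases fact1 i with h0 | ⟨hx', _⟩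
      · rw [h0]; simp
      · rcases eq_or_ne i h with rfl | hih
        · rw [hμh]; simp [hab]
        · exact hcon i hx' hih
    have hg₀none : μ g₀ = none := by
      rcases fact1 g₀ with h0 | ⟨_, hor⟩
      · exact h0
      · rcases hor with h1 | h1
        · exact absurd h1 (cap_unique q a hqa μ hμmatch h g₀ (Ne.symm hg₀h) hμh)
        · exact absurd h1 (hnob g₀)
    apply pareto_step w hw ψ hwpe P q hq P' hne (Function.update μ g₀ (some b)) ?_ ?_ ?_
    · intro c
      rcases eq_or_ne c b with rfl | hcb
      · refine le_trans (Finset.card_le_card (?_ : _ ⊆ ({g₀} : Finset I))) (by simpa using hq c)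
        intro j hj
        rw [Finset.mem_filter] at hj
        have hj2 := hj.2
        rw [Finset.mem_singleton]
        rcases eq_or_ne j g₀ with rfl | hjg
        · rfl
        · rw [Function.update_of_ne hjg] at hj2
          exact absurd hj2 (hnob j)
      · refine le_trans (Finset.card_le_card ?_) (hμmatch c)
        intro j hj
        rw [Finset.mem_filter] at hj ⊢
        refine ⟨hj.1, ?_⟩
        have hj2 := hj.2
        rcases eq_or_ne j g₀ with rfl | hjg
        · rw [Function.update_self] at hj2
          exact absurd (Option.some_inj.mp hj2) hcb.symm
        · rwa [Function.update_of_ne hjg] at hj2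
    · intro j
      rcases eq_or_ne j g₀ with rfl | hjg
      · right
        rw [← hμdef, Function.update_self, hPxyz j hg₀xyz, hg₀none]
        exact mk_lt_snd (some a) (some b) none (by simp) (by simp)
      · left
        rw [← hμdef]
        exact Function.update_of_ne hjg _ _
    · intro hE
      have h1 := congrFun hE g₀
      rw [Function.update_self, ← hμdef] at h1
      exact hnob g₀ h1.symm
  obtain ⟨g, hgxyz, hgh, hμg⟩ := fact3
  -- assignments of the remaining agents
  have hthird : ∀ u', (u' = x ∨ u' = y ∨ u' = z) → u' ≠ h → u' ≠ g → μ u' = none := by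
    intro u' hu'xyz hu'h hu'g
    rcases fact1 u' with h0 | ⟨_, hor⟩
    · exact h0
    · rcases hor with h1 | h1
      · exact absurd h1 (cap_unique q a hqa μ hμmatch h u' (Ne.symm hu'h) hμh)
      · exact absurd h1 (cap_unique q b hqb μ hμmatch g u' (Ne.symm hu'g) hμg)
  -- the generic invocation of the final contradiction
  have callfs : ∀ γ', (γ' = x ∨ γ' = y ∨ γ' = z) → γ' ≠ h → γ' ≠ g →
      w h < w g + w γ' → (w g ≤ w γ' ∨ w h ≤ w g) → False := by
    intro γ' hγxyz hγh hγg hF1 hF2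
    have hcover : ∀ j, (j = x ∨ j = y ∨ j = z) → (j = h ∨ j = g ∨ j = γ') := by
      intro j hj
      have hsub : ({h, g, γ'} : Finset I) ⊆ {x, y, z} := by
        intro t ht
        simp only [Finset.mem_insert, Finset.mem_singleton] at ht ⊢
        rcases ht with rfl | rfl | rfl
        · exact hhxyz
        · exact hgxyz
        · exact hγxyz
      have hcard1 : ({h, g, γ'} : Finset I).card = 3 := by
        rw [Finset.card_insert_of_notMem (by
          simp only [Finset.mem_insert, Finset.mem_singleton]
          push_neg
          exact ⟨Ne.symm hgh, fun hE => hγh hE.symm⟩),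
          Finset.card_insert_of_notMem (by
          simp only [Finset.mem_singleton]
          exact fun hE => hγg hE.symm),
          Finset.card_singleton]
      have hcard2 : ({x, y, z} : Finset I).card = 3 := by
        rw [Finset.card_insert_of_notMem (by
          simp only [Finset.mem_insert, Finset.mem_singleton]
          push_neg
          exact ⟨hxy, hxz⟩),
          Finset.card_insert_of_notMem (by
          simp only [Finset.mem_singleton]
          exact hyz'),
          Finset.card_singleton]
      have heq : ({h, g, γ'} : Finset I) = {x, y, z} :=
        Finset.eq_of_subset_of_card_le hsub (by rw [hcard1, hcard2])
      have : j ∈ ({h, g, γ'} : Finset I) := by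
        rw [heq]
        simp only [Finset.mem_insert, Finset.mem_singleton]
        exact hj
      simpa only [Finset.mem_insert, Finset.mem_singleton] using this
    refine final_step w hw ψ hwpe h g γ' (Ne.symm hgh) (Ne.symm hγh) (Ne.symm hγg)
      a b hab q hq hqa hqb P (hPxyz γ' hγxyz) P' hne ?_ ?_ ?_ ?_ ?_ ?_
      (hPxyz g hgxyz) hF1 hF2
    · rw [← hμdef]; exact hμmatch
    · rw [← hμdef]; exact hμh
    · rw [← hμdef]; exact hμg
    · rw [← hμdef]; exact hthird γ' hγxyz hγh hγg
    · intro j hj1 hj2 hj3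
      rw [← hμdef]
      apply hout
      intro hjxyz
      rcases hcover j hjxyz with rfl | rfl | rfl
      · exact hj1 rfl
      · exact hj2 rfl
      · exact hj3 rfl
    · intro j hj1 hj2 hj3
      apply hPout
      intro hjxyz
      rcases hcover j hjxyz with rfl | rfl | rfl
      · exact hj1 rfl
      · exact hj2 rfl
      · exact hj3 rfl
  -- case analysis on which agents hold a and b
  have hwx := hw x
  have hwy := hw y
  have hwz := hw z
  rcases hhxyz with hh | hh | hh <;> rcases hgxyz with hg | hg | hg
  · exact absurd (hg.trans hh.symm) hgh
  · exact callfs z (Or.inr (Or.inr rfl)) (by rw [hh]; exact Ne.symm hxz)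
      (by rw [hg]; exact Ne.symm hyz') (by rw [hh, hg]; exact hxw)
      (by rw [hh, hg]; exact Or.inl (le_of_eq hyzw))
  · exact callfs y (Or.inr (Or.inl rfl)) (by rw [hh]; exact Ne.symm hxy)
      (by rw [hg]; exact hyz') (by rw [hh, hg]; linarith)
      (by rw [hh, hg]; exact Or.inl (le_of_eq hyzw.symm))
  · exact callfs z (Or.inr (Or.inr rfl)) (by rw [hh]; exact Ne.symm hyz')
      (by rw [hg]; exact Ne.symm hxz) (by rw [hh, hg]; linarith)
      (by rw [hh, hg]
          rcases le_total (w x) (w z) with hle | hle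
          · exact Or.inl hle
          · exact Or.inr (by linarith))
  · exact absurd (hg.trans hh.symm) hgh
  · exact callfs x (Or.inl rfl) (by rw [hh]; exact hxy)
      (by rw [hg]; exact hxz) (by rw [hh, hg]; linarith)
      (by rw [hh, hg]; exact Or.inr (le_of_eq hyzw))
  · exact callfs y (Or.inr (Or.inl rfl)) (by rw [hh]; exact hyz')
      (by rw [hg]; exact Ne.symm hxy) (by rw [hh, hg]; linarith)
      (by rw [hh, hg]
          rcases le_total (w x) (w y) with hle | hle
          · exact Or.inl hle
          · exact Or.inr (by linarith))
  · exact callfs x (Or.inl rfl) (by rw [hh]; exact hxz)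
      (by rw [hg]; exact hxy) (by rw [hh, hg]; linarith)
      (by rw [hh, hg]; exact Or.inr (le_of_eq hyzw.symm))
  · exact absurd (hg.trans hh.symm) hgh
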